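/- Under the standing assumptions, the ground state energies satisfy m_λ ≤ m_Ω for every λ > 1, where m_Ω = inf_{N_Ω} J_Ω is the ground state energy of the Dirichlet problem Δ²u − Δu + u = |u|^{p−2}u on the potential well Ω = {a = 0} with u = 0 on ∂Ω, and moreover m_λ → m_Ω as λ → ∞. -/

import Mathlib

open Filter Topology

structure GraphData (V : Type*) where
  ω : V → V → ℝ
  μ : V → ℝ
  sym : ∀ x y, ω x y = ω y x
  nonneg : ∀ x y, 0 ≤ ω x y
  loopless : ∀ x, ω x x = 0
  locfin : ∀ x, {y | ω x y ≠ 0}.Finite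
  μpos : ∀ x, 0 < μ x

variable {V : Type*}

noncomputable def GraphData.lap (g : GraphData V) (u : V → ℝ) (x : V) : ℝ :=
  (1 / g.μ x) * ∑' y, g.ω x y * (u y - u x)

noncomputable def GraphData.grad (g : GraphData V) (u v : V → ℝ) (x : V) : ℝ :=
  (1 / (2 * g.μ x)) * ∑' y, g.ω x y * (u y - u x) * (v y - v x)

noncomputable def GraphData.integral (g : GraphData V) (f : V → ℝ) : ℝ :=
  ∑' x, g.μ x * f x

def GraphData.G (g : GraphData V) : SimpleGraph V where
  Adj x y := 0 < g.ω x y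
  symm := ⟨fun x y (h : 0 < g.ω x y) => show 0 < g.ω y x by rwa [g.sym y x]⟩
  loopless := ⟨fun x (h : 0 < g.ω x x) => by simp [g.loopless x] at h⟩

noncomputable def GraphData.enormSq (g : GraphData V) (a : V → ℝ) (lam : ℝ) (u : V → ℝ) : ℝ :=
  ∑' x, g.μ x * ((g.lap u x) ^ 2 + g.grad u u x + (lam * a x + 1) * (u x) ^ 2)

def GraphData.memE (g : GraphData V) (a : V → ℝ) (lam : ℝ) (u : V → ℝ) : Prop :=
  Summable fun x => g.μ x * ((g.lap u x) ^ 2 + g.grad u u x + (lam * a x + 1) * (u x) ^ 2)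

noncomputable def GraphData.lpInt (g : GraphData V) (p : ℝ) (u : V → ℝ) : ℝ :=
  ∑' x, g.μ x * |u x| ^ p

noncomputable def GraphData.Jlam (g : GraphData V) (a : V → ℝ) (lam p : ℝ) (u : V → ℝ) : ℝ :=
  (1 / 2) * g.enormSq a lam u - (1 / p) * g.lpInt p u

def GraphData.Nehari (g : GraphData V) (a : V → ℝ) (lam p : ℝ) : Set (V → ℝ) :=
  {u | u ≠ 0 ∧ g.memE a lam u ∧ g.enormSq a lam u = g.lpInt p u}

noncomputable def GraphData.Jderiv (g : GraphData V) (a : V → ℝ) (lam p : ℝ) (u φ : V → ℝ) : ℝ :=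
  (∑' x, g.μ x * (g.lap u x * g.lap φ x + g.grad u φ x + (lam * a x + 1) * u x * φ x))
    - ∑' x, g.μ x * (|u x| ^ (p - 2) * u x * φ x)

def GraphData.bdry (g : GraphData V) (Ω : Set V) : Set V :=
  {y | y ∉ Ω ∧ ∃ x ∈ Ω, 0 < g.ω x y}

noncomputable def GraphData.hnormSq (g : GraphData V) (Ω : Set V) (u : V → ℝ) : ℝ :=
  (∑' x : ↥(Ω ∪ g.bdry Ω), g.μ x * ((g.lap u x) ^ 2 + g.grad u u x))
    + ∑' x : Ω, g.μ x * (u x) ^ 2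

noncomputable def GraphData.lpIntO (g : GraphData V) (Ω : Set V) (p : ℝ) (u : V → ℝ) : ℝ :=
  ∑' x : Ω, g.μ x * |u x| ^ p

noncomputable def GraphData.JOmega (g : GraphData V) (Ω : Set V) (p : ℝ) (u : V → ℝ) : ℝ :=
  (1 / 2) * g.hnormSq Ω u - (1 / p) * g.lpIntO Ω p u

def GraphData.memH (g : GraphData V) (Ω : Set V) (u : V → ℝ) : Prop :=
  ∀ x ∉ Ω, u x = 0

def GraphData.NehariO (g : GraphData V) (Ω : Set V) (p : ℝ) : Set (V → ℝ) :=
  {u | u ≠ 0 ∧ g.memH Ω u ∧ g.hnormSq Ω u = g.lpIntO Ω p u}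

noncomputable def GraphData.JderivO (g : GraphData V) (Ω : Set V) (p : ℝ) (u φ : V → ℝ) : ℝ :=
  (∑' x : ↥(Ω ∪ g.bdry Ω), g.μ x * (g.lap u x * g.lap φ x + g.grad u φ x))
    + (∑' x : Ω, g.μ x * (u x * φ x))
    - ∑' x : Ω, g.μ x * (|u x| ^ (p - 2) * u x * φ x)


section Aux
namespace GraphData

variable (g : GraphData V)

lemma summable_omega (x : V) (F : V → ℝ) : Summable (fun y => g.ω x y * F y) := by
  apply summable_of_ne_finset_zero (s := (g.locfin x).toFinset)
  intro b hb
  simp only [Set.Finite.mem_toFinset, Set.mem_setOf_eq, not_not] at hb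
  simp [hb]

lemma summable_omega' (x : V) : Summable (fun y => g.ω x y) := by
  simpa using g.summable_omega x (fun _ => 1)

/-- abs of tsum le tsum of bound -/
lemma abs_tsum_le {f h : V → ℝ} (hs : Summable f) (hs2 : Summable h)
    (hb : ∀ y, |f y| ≤ h y) : |∑' y, f y| ≤ ∑' y, h y := by
  rw [abs_le]
  constructor
  · have h1 : ∑' y, -(h y) ≤ ∑' y, f y :=
      Summable.tsum_le_tsum (fun y => (abs_le.mp (hb y)).1) hs2.neg hs
    rw [tsum_neg] at h1
    linarith
  · exact Summable.tsum_le_tsum (fun y => (abs_le.mp (hb y)).2) hs hs2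

lemma grad_nonneg (u : V → ℝ) (x : V) : 0 ≤ g.grad u u x := by
  unfold grad
  apply mul_nonneg
  · have := g.μpos x; positivity
  · apply tsum_nonneg
    intro y
    have := g.nonneg x y
    have : 0 ≤ g.ω x y * (u y - u x) * (u y - u x) := by
      rw [mul_assoc]; exact mul_nonneg this (mul_self_nonneg _)
    exact this

lemma lap_smul (t : ℝ) (u : V → ℝ) (x : V) : g.lap (fun y => t * u y) x = t * g.lap u x := by
  unfold lap
  have : (fun y => g.ω x y * (t * u y - t * u x)) = fun y => t * (g.ω x y * (u y - u x)) := by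
    funext y; ring
  rw [this, tsum_mul_left]; ring

lemma grad_smul (t : ℝ) (u : V → ℝ) (x : V) :
    g.grad (fun y => t * u y) (fun y => t * u y) x = t ^ 2 * g.grad u u x := by
  unfold grad
  have : (fun y => g.ω x y * (t * u y - t * u x) * (t * u y - t * u x))
      = fun y => t ^ 2 * (g.ω x y * (u y - u x) * (u y - u x)) := by
    funext y; ring
  rw [this, tsum_mul_left]; ring

lemma lap_sub (u w : V → ℝ) (x : V) :
    g.lap (fun y => u y - w y) x = g.lap u x - g.lap w x := by
  unfold lap
  have : (fun y => g.ω x y * ((u y - w y) - (u x - w x)))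
      = fun y => (g.ω x y * (u y - u x)) - (g.ω x y * (w y - w x)) := by
    funext y; ring
  rw [this, Summable.tsum_sub (g.summable_omega x _) (g.summable_omega x _)]
  ring

lemma grad_sub_sub (u w : V → ℝ) (x : V) :
    g.grad (fun y => u y - w y) (fun y => u y - w y) x
      = g.grad u u x - 2 * g.grad u w x + g.grad w w x := by
  unfold grad
  have h1 : (fun y => g.ω x y * ((u y - w y) - (u x - w x)) * ((u y - w y) - (u x - w x)))
      = fun y => (g.ω x y * (u y - u x) * (u y - u x)
          - 2 * (g.ω x y * (u y - u x) * (w y - w x)))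
          + g.ω x y * (w y - w x) * (w y - w x) := by
    funext y; ring
  have s1 : Summable (fun y => g.ω x y * (u y - u x) * (u y - u x)) := by
    have := g.summable_omega x (fun y => (u y - u x) * (u y - u x))
    simpa [mul_assoc] using this
  have s2 : Summable (fun y => g.ω x y * (u y - u x) * (w y - w x)) := by
    have := g.summable_omega x (fun y => (u y - u x) * (w y - w x))
    simpa [mul_assoc] using this
  have s3 : Summable (fun y => g.ω x y * (w y - w x) * (w y - w x)) := by
    have := g.summable_omega x (fun y => (w y - w x) * (w y - w x))
    simpa [mul_assoc] using this
  rw [h1, Summable.tsum_add (by exact (s1.sub (by simpa [mul_assoc] using s2.mul_left 2))) s3,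
    Summable.tsum_sub s1 (by simpa [mul_assoc] using s2.mul_left 2)]
  rw [show (fun y => 2 * (g.ω x y * (u y - u x) * (w y - w x)))
    = (fun y => 2 * (g.ω x y * ((u y - u x) * (w y - w x)))) by funext y; ring, tsum_mul_left]
  have : ∑' y, g.ω x y * (u y - u x) * (w y - w x)
      = ∑' y, g.ω x y * ((u y - u x) * (w y - w x)) := by
    congr 1; funext y; ring
  rw [← this]
  ring

lemma lap_bound (μmin C : ℝ) (hμmin : 0 < μmin) (hμ : ∀ x, μmin ≤ g.μ x)
    (hω : ∀ x, ∑' y, g.ω x y ≤ C) {F : V → ℝ} {M : ℝ} (hM : 0 ≤ M)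
    (hF : ∀ y, |F y| ≤ M) (x : V) : |g.lap F x| ≤ 2 * C * M / μmin := by
  unfold lap
  rw [abs_mul]
  have h1 : |∑' y, g.ω x y * (F y - F x)| ≤ ∑' y, g.ω x y * (2 * M) := by
    apply abs_tsum_le (g.summable_omega x _) (g.summable_omega x _)
    intro y
    rw [abs_mul, abs_of_nonneg (g.nonneg x y)]
    apply mul_le_mul_of_nonneg_left _ (g.nonneg x y)
    calc |F y - F x| ≤ |F y| + |F x| := abs_sub _ _
      _ ≤ M + M := add_le_add (hF y) (hF x)
      _ = 2 * M := by ring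
  have h2 : ∑' y, g.ω x y * (2 * M) ≤ C * (2 * M) := by
    rw [show (fun y => g.ω x y * (2*M)) = (fun y => (2*M) * g.ω x y) from by funext y; ring,
      tsum_mul_left]
    have hC := hω x
    have h0 : (0:ℝ) ≤ 2 * M := by positivity
    have := mul_le_mul_of_nonneg_left hC h0
    linarith
  have hμx : 0 < g.μ x := g.μpos x
  have : |1 / g.μ x| = 1 / g.μ x := abs_of_pos (by positivity)
  rw [this]
  have hC : 0 ≤ C := le_trans (tsum_nonneg (fun y => g.nonneg x y)) (hω x)
  calc 1 / g.μ x * |∑' y, g.ω x y * (F y - F x)| ≤ 1/μmin * (C * (2*M)) := by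
        apply mul_le_mul
        · apply one_div_le_one_div_of_le hμmin (hμ x)
        · exact le_trans h1 h2
        · exact abs_nonneg _
        · positivity
    _ = 2 * C * M / μmin := by field_simp

lemma grad_bound (μmin C : ℝ) (hμmin : 0 < μmin) (hμ : ∀ x, μmin ≤ g.μ x)
    (hω : ∀ x, ∑' y, g.ω x y ≤ C) {F H : V → ℝ} {M N : ℝ} (hM : 0 ≤ M) (hN : 0 ≤ N)
    (hF : ∀ y, |F y| ≤ M) (hH : ∀ y, |H y| ≤ N) (x : V) :
    |g.grad F H x| ≤ 2 * C * M * N / μmin := by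
  unfold grad
  rw [abs_mul]
  have h1 : |∑' y, g.ω x y * (F y - F x) * (H y - H x)| ≤ ∑' y, g.ω x y * (4 * M * N) := by
    apply abs_tsum_le _ (g.summable_omega x _)
    · intro y
      rw [abs_mul, abs_mul, abs_of_nonneg (g.nonneg x y), mul_assoc]
      apply mul_le_mul_of_nonneg_left _ (g.nonneg x y)
      have e1 : |F y - F x| ≤ 2 * M := by
        calc |F y - F x| ≤ |F y| + |F x| := abs_sub _ _
          _ ≤ 2 * M := by linarith [hF y, hF x]
      have e2 : |H y - H x| ≤ 2 * N := by
        calc |H y - H x| ≤ |H y| + |H x| := abs_sub _ _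
          _ ≤ 2 * N := by linarith [hH y, hH x]
      calc |F y - F x| * |H y - H x| ≤ (2*M) * (2*N) :=
            mul_le_mul e1 e2 (abs_nonneg _) (by positivity)
        _ = 4 * M * N := by ring
    · have := g.summable_omega x (fun y => (F y - F x) * (H y - H x))
      simpa [mul_assoc] using this
  have h2 : ∑' y, g.ω x y * (4 * M * N) ≤ C * (4 * M * N) := by
    rw [show (fun y => g.ω x y * (4*M*N)) = (fun y => (4*M*N) * g.ω x y) from by funext y; ring,
      tsum_mul_left]
    have hC := hω x
    have h0 : (0:ℝ) ≤ 4 * M * N := by positivity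
    have := mul_le_mul_of_nonneg_left hC h0
    linarith
  have hμx : 0 < g.μ x := g.μpos x
  have habs : |1 / (2 * g.μ x)| = 1 / (2 * g.μ x) := abs_of_pos (by positivity)
  rw [habs]
  have hC : 0 ≤ C := le_trans (tsum_nonneg (fun y => g.nonneg x y)) (hω x)
  calc 1 / (2 * g.μ x) * |∑' y, g.ω x y * (F y - F x) * (H y - H x)|
      ≤ 1/(2*μmin) * (C * (4*M*N)) := by
        apply mul_le_mul
        · apply one_div_le_one_div_of_le (by positivity)
          have := hμ x; linarith
        · exact le_trans h1 h2
        · exact abs_nonneg _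
        · positivity
    _ = 2 * C * M * N / μmin := by field_simp; ring

lemma tsum_subtype_eq_sum {S : Set V} (hS : S.Finite) (f : V → ℝ) :
    ∑' x : S, f x = ∑ x ∈ hS.toFinset, f x := by
  rw [tsum_subtype]
  rw [tsum_eq_sum (s := hS.toFinset) (f := S.indicator f)]
  · apply Finset.sum_congr rfl
    intro x hx
    rw [Set.indicator_of_mem (by simpa using hx)]
  · intro b hb
    exact Set.indicator_of_notMem (by simpa using hb) f

lemma pow_one_add_le (n : ℕ) {x : ℝ} (hx0 : 0 ≤ x) (hx1 : x ≤ 1) :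
    (1 + x) ^ n ≤ 1 + 3 ^ n * x := by
  induction n with
  | zero => simpa using by linarith
  | succ n ih =>
    have h3 : (0:ℝ) ≤ 3 ^ n := by positivity
    have h4 : (1:ℝ) ≤ 3 ^ n := one_le_pow₀ (by norm_num)
    have hxx : x * x ≤ x := by nlinarith
    calc (1+x)^(n+1) = (1+x)^n * (1+x) := by ring
      _ ≤ (1 + 3^n * x) * (1+x) := by nlinarith
      _ = 1 + x * (1 + 3^n) + 3^n * (x*x) := by ring
      _ ≤ 1 + x * (1 + 3^n) + 3^n * x := by nlinarith
      _ = 1 + (1 + 2 * 3^n) * x := by ring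
      _ ≤ 1 + 3^(n+1) * x := by
          have : (1:ℝ) + 2*3^n ≤ 3^(n+1) := by rw [pow_succ]; linarith
          nlinarith

end GraphData

end Aux

lemma finite_ball (G : SimpleGraph V) (hfin : ∀ x : V, (G.neighborSet x).Finite) (x : V) :
    ∀ n : ℕ, {y | ∃ w : G.Walk x y, w.length ≤ n}.Finite := by
  intro n
  induction n with
  | zero =>
    apply Set.Finite.subset (Set.finite_singleton x)
    rintro y ⟨w, hw⟩
    have : w.length = 0 := Nat.le_zero.mp hw
    have := w.eq_of_length_eq_zero this
    simp [this]
  | succ n ih =>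
    apply Set.Finite.subset (ih.union (Set.Finite.biUnion ih (fun z _ => hfin z)))
    rintro y ⟨w, hw⟩
    have hrev : w.reverse.length ≤ n + 1 := by
      rw [SimpleGraph.Walk.length_reverse]; exact hw
    rcases hw2 : w.reverse with _ | ⟨h, q⟩
    · left
      exact ⟨SimpleGraph.Walk.nil, by simp⟩
    · right
      rename_i z
      refine Set.mem_biUnion (x := z) ?_ ?_
      · refine ⟨q.reverse, ?_⟩
        rw [SimpleGraph.Walk.length_reverse]
        have : w.reverse.length = q.length + 1 := by rw [hw2]; simp
        omega
      · exact h.symm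


section Mid
namespace GraphData
variable {V : Type*} {g : GraphData V} {μmin C p : ℝ} {a : V → ℝ}

structure Pack (g : GraphData V) (μmin C p : ℝ) (a : V → ℝ) where
  δ : ℝ
  hδpos : 0 < δ
  hδ : ∀ x, a x ≠ 0 → δ ≤ a x
  hμmin : 0 < μmin
  hμ : ∀ x, μmin ≤ g.μ x
  hω : ∀ x, ∑' y, g.ω x y ≤ C
  ha : ∀ x, 0 ≤ a x
  hp : 2 < p
  hΩfin : {x | a x = 0}.Finite
  hS1fin : ({x | a x = 0} ∪ g.bdry {x | a x = 0}).Finite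
  hΩne : {x | a x = 0}.Nonempty

lemma Pack.hC (P : Pack g μmin C p a) : 0 ≤ C := by
  obtain ⟨x, -⟩ := P.hΩne
  exact le_trans (tsum_nonneg fun y => g.nonneg x y) (P.hω x)

lemma Pack.hppos (P : Pack g μmin C p a) : 0 < p := by linarith [P.hp]

lemma Pack.hcp (P : Pack g μmin C p a) : 0 < 1/2 - 1/p := by
  have h2 : (0:ℝ) < 2 := by norm_num
  have := one_div_lt_one_div_of_lt h2 P.hp
  linarith

lemma supp_zero (P : Pack g μmin C p a) {u : V → ℝ} (hu : g.memH {x | a x = 0} u)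
    {x : V} (hx : x ∉ {x | a x = 0} ∪ g.bdry {x | a x = 0}) :
    u x = 0 ∧ g.lap u x = 0 ∧ g.grad u u x = 0 := by
  have hxΩ : x ∉ {x | a x = 0} := fun h => hx (Or.inl h)
  have hux : u x = 0 := hu x hxΩ
  have key : ∀ y, g.ω x y * (u y - u x) = 0 := by
    intro y
    by_cases hω0 : g.ω x y = 0
    · simp [hω0]
    · have hωpos : 0 < g.ω x y := lt_of_le_of_ne (g.nonneg x y) (Ne.symm hω0)
      have huy : u y = 0 := by
        by_cases hyΩ : y ∈ {x | a x = 0}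
        · exact absurd (Or.inr ⟨hxΩ, y, hyΩ, by rwa [g.sym y x]⟩) hx
        · exact hu y hyΩ
      simp [huy, hux]
  refine ⟨hux, ?_, ?_⟩
  · unfold lap
    rw [(tsum_congr key).trans tsum_zero, mul_zero]
  · unfold grad
    have key2 : ∀ y, g.ω x y * (u y - u x) * (u y - u x) = 0 := fun y => by
      rw [key y, zero_mul]
    rw [(tsum_congr key2).trans tsum_zero, mul_zero]

lemma memH_eqs (P : Pack g μmin C p a) {u : V → ℝ} (hu : g.memH {x | a x = 0} u) (lam : ℝ) :
    g.memE a lam u ∧ g.enormSq a lam u = g.hnormSq {x | a x = 0} u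
    ∧ g.lpInt p u = g.lpIntO {x | a x = 0} p u := by
  classical
  set S1f := P.hS1fin.toFinset with hS1fdef
  set Ωf := P.hΩfin.toFinset with hΩfdef
  have hsub : Ωf ⊆ S1f := by
    intro x hx
    simp only [hΩfdef, hS1fdef, Set.Finite.mem_toFinset] at hx ⊢
    exact Or.inl hx
  have hterm0 : ∀ x ∉ S1f,
      g.μ x * ((g.lap u x) ^ 2 + g.grad u u x + (lam * a x + 1) * (u x) ^ 2) = 0 := by
    intro x hx
    have hx' : x ∉ {x | a x = 0} ∪ g.bdry {x | a x = 0} := by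
      simpa only [hS1fdef, Set.Finite.mem_toFinset] using hx
    obtain ⟨h1, h2, h3⟩ := supp_zero P hu hx'
    rw [h1, h2, h3]; ring
  have hmemE : g.memE a lam u := summable_of_ne_finset_zero hterm0
  have henorm : g.enormSq a lam u
      = ∑ x ∈ S1f, g.μ x * ((g.lap u x) ^ 2 + g.grad u u x + (lam * a x + 1) * (u x) ^ 2) :=
    tsum_eq_sum hterm0
  have hsplit : ∑ x ∈ S1f, g.μ x * ((g.lap u x) ^ 2 + g.grad u u x + (lam * a x + 1) * (u x) ^ 2)
      = ∑ x ∈ S1f, g.μ x * ((g.lap u x) ^ 2 + g.grad u u x)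
        + ∑ x ∈ S1f, (if x ∈ Ωf then g.μ x * (u x) ^ 2 else 0) := by
    rw [← Finset.sum_add_distrib]
    apply Finset.sum_congr rfl
    intro x _
    by_cases hxΩ : x ∈ Ωf
    · have ha0 : a x = 0 := by simpa only [hΩfdef, Set.Finite.mem_toFinset, Set.mem_setOf_eq] using hxΩ
      rw [if_pos hxΩ, ha0]; ring
    · have hxΩ' : x ∉ {x | a x = 0} := by simpa only [hΩfdef, Set.Finite.mem_toFinset] using hxΩ
      rw [if_neg hxΩ, hu x hxΩ']; ring
  have hif : ∑ x ∈ S1f, (if x ∈ Ωf then g.μ x * (u x) ^ 2 else 0)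
      = ∑ x ∈ Ωf, g.μ x * (u x) ^ 2 := by
    rw [Finset.sum_ite_mem, Finset.inter_eq_right.mpr hsub]
  have hh : g.hnormSq {x | a x = 0} u = ∑ x ∈ S1f, g.μ x * ((g.lap u x) ^ 2 + g.grad u u x)
      + ∑ x ∈ Ωf, g.μ x * (u x) ^ 2 := by
    unfold hnormSq
    rw [tsum_subtype_eq_sum P.hS1fin (fun x => g.μ x * ((g.lap u x) ^ 2 + g.grad u u x)),
      tsum_subtype_eq_sum P.hΩfin (fun x => g.μ x * (u x) ^ 2)]
  have hlp0 : ∀ x ∉ Ωf, g.μ x * |u x| ^ p = 0 := by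
    intro x hx
    have hux : u x = 0 := hu x (by simpa only [hΩfdef, Set.Finite.mem_toFinset] using hx)
    rw [hux, abs_zero, Real.zero_rpow (by linarith [P.hp] : p ≠ 0), mul_zero]
  have hlp : g.lpInt p u = ∑ x ∈ Ωf, g.μ x * |u x| ^ p := tsum_eq_sum hlp0
  have hlpO : g.lpIntO {x | a x = 0} p u = ∑ x ∈ Ωf, g.μ x * |u x| ^ p :=
    tsum_subtype_eq_sum P.hΩfin (fun x => g.μ x * |u x| ^ p)
  exact ⟨hmemE, by rw [henorm, hsplit, hif, hh], by rw [hlp, hlpO]⟩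

lemma NehariO_subset (P : Pack g μmin C p a) (lam : ℝ) {u : V → ℝ}
    (hu : u ∈ g.NehariO {x | a x = 0} p) :
    u ∈ g.Nehari a lam p ∧ g.Jlam a lam p u = g.JOmega {x | a x = 0} p u := by
  obtain ⟨h0, hH, heq⟩ := hu
  obtain ⟨hE, he, hl⟩ := memH_eqs P hH lam
  refine ⟨⟨h0, hE, by rw [he, hl]; exact heq⟩, ?_⟩
  unfold Jlam JOmega
  rw [he, hl]

lemma hnormSq_nonneg (g : GraphData V) (Ω : Set V) (u : V → ℝ) : 0 ≤ g.hnormSq Ω u := by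
  unfold hnormSq
  apply add_nonneg
  · apply tsum_nonneg
    intro x
    have := g.μpos x
    have := g.grad_nonneg u (x : V)
    positivity
  · apply tsum_nonneg
    intro x
    have := g.μpos (x : V)
    positivity

lemma JOmega_nonneg (P : Pack g μmin C p a) {Ω : Set V} {u : V → ℝ}
    (hu : u ∈ g.NehariO Ω p) : 0 ≤ g.JOmega Ω p u := by
  obtain ⟨-, -, heq⟩ := hu
  unfold JOmega
  rw [← heq]
  have h1 := hnormSq_nonneg g Ω u
  have h2 := P.hcp
  nlinarith

lemma enormSq_nonneg (P : Pack g μmin C p a) {lam : ℝ} (hlam : 0 ≤ lam) (u : V → ℝ) :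
    0 ≤ g.enormSq a lam u := by
  unfold enormSq
  apply tsum_nonneg
  intro x
  have h1 := g.μpos x
  have h2 := g.grad_nonneg u x
  have h3 := P.ha x
  have h4 : 0 ≤ lam * a x + 1 := by positivity
  positivity

lemma Jlam_eq {lam : ℝ} {u : V → ℝ} (hu : u ∈ g.Nehari a lam p) :
    g.Jlam a lam p u = (1/2 - 1/p) * g.enormSq a lam u := by
  unfold Jlam
  rw [← hu.2.2]
  ring

lemma Jlam_nonneg (P : Pack g μmin C p a) {lam : ℝ} (hlam : 0 ≤ lam) {u : V → ℝ}
    (hu : u ∈ g.Nehari a lam p) : 0 ≤ g.Jlam a lam p u := by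
  rw [Jlam_eq hu]
  exact mul_nonneg (le_of_lt P.hcp) (enormSq_nonneg P hlam u)

end GraphData
end Mid


section Mid2
namespace GraphData
variable {V : Type*} {g : GraphData V} {μmin C p : ℝ} {a : V → ℝ}

lemma rpow_two' (x : ℝ) : x ^ (2:ℝ) = x ^ (2:ℕ) := by
  rw [show (2:ℝ) = ((2:ℕ):ℝ) by norm_num, Real.rpow_natCast]

lemma abs_rpow_le (hp : 2 < p) {t B : ℝ} (hB : 0 ≤ B) (ht : |t| ≤ B) :
    |t| ^ p ≤ B ^ (p - 2) * t ^ 2 := by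
  rcases eq_or_ne t 0 with rfl | ht0
  · rw [abs_zero, Real.zero_rpow (by linarith : p ≠ 0)]
    positivity
  · have habs : 0 < |t| := abs_pos.mpr ht0
    have h1 : |t| ^ p = |t| ^ (p - 2) * |t| ^ (2:ℝ) := by
      rw [← Real.rpow_add habs]; ring_nf
    rw [h1, rpow_two', sq_abs]
    apply mul_le_mul_of_nonneg_right _ (sq_nonneg t)
    exact Real.rpow_le_rpow (le_of_lt habs) ht (by linarith)

lemma nehari_lower (P : Pack g μmin C p a) {lam : ℝ} (hlam : 0 ≤ lam) {u : V → ℝ}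
    (hu : u ∈ g.Nehari a lam p) :
    μmin ≤ g.enormSq a lam u
    ∧ Summable (fun x => g.μ x * ((lam * a x + 1) * u x ^ 2))
    ∧ (∑' x, g.μ x * ((lam * a x + 1) * u x ^ 2)) ≤ g.enormSq a lam u
    ∧ Summable (fun x => g.μ x * |u x| ^ p) := by
  obtain ⟨hu0, hE, heqN⟩ := hu
  set e := g.enormSq a lam u with he_def
  have htermnn : ∀ x, 0 ≤ g.μ x * ((g.lap u x) ^ 2 + g.grad u u x + (lam * a x + 1) * (u x) ^ 2) := by
    intro x
    have h1 := g.μpos x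
    have h2 := g.grad_nonneg u x
    have h3 := P.ha x
    positivity
  have hmid : ∀ x, g.μ x * ((lam * a x + 1) * u x ^ 2)
      ≤ g.μ x * ((g.lap u x) ^ 2 + g.grad u u x + (lam * a x + 1) * (u x) ^ 2) := by
    intro x
    have h1 := le_of_lt (g.μpos x)
    have h2 := g.grad_nonneg u x
    nlinarith [sq_nonneg (g.lap u x)]
  have hmidnn : ∀ x, 0 ≤ g.μ x * ((lam * a x + 1) * u x ^ 2) := by
    intro x
    have h1 := g.μpos x
    have h3 := P.ha x
    positivity
  have hsum2 : Summable (fun x => g.μ x * ((lam * a x + 1) * u x ^ 2)) :=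
    Summable.of_nonneg_of_le hmidnn hmid hE
  have hsumle : (∑' x, g.μ x * ((lam * a x + 1) * u x ^ 2)) ≤ e := Summable.tsum_le_tsum hmid hsum2 hE
  have h0e : (0:ℝ) ≤ e := tsum_nonneg htermnn
  have hepos : 0 < e := by
    rcases lt_or_eq_of_le h0e with h | h
    · exact h
    · exfalso
      apply hu0
      funext x
      have hle : g.μ x * ((g.lap u x) ^ 2 + g.grad u u x + (lam * a x + 1) * (u x) ^ 2) ≤ e :=
        Summable.le_tsum hE x (fun j _ => htermnn j)
      rw [← h] at hle
      have hzero : g.μ x * ((g.lap u x) ^ 2 + g.grad u u x + (lam * a x + 1) * (u x) ^ 2) = 0 :=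
        le_antisymm hle (htermnn x)
      have h1 := g.μpos x
      have h2 := g.grad_nonneg u x
      have h3 := P.ha x
      have h5 : (0:ℝ) < lam * a x + 1 := by positivity
      have hCnn : (0:ℝ) ≤ (lam * a x + 1) * u x ^ 2 := by positivity
      have h4le : (lam * a x + 1) * u x ^ 2 ≤ 0 := by nlinarith [sq_nonneg (g.lap u x)]
      have h4 : (lam * a x + 1) * u x ^ 2 = 0 := le_antisymm h4le hCnn
      have := (mul_eq_zero.mp h4).resolve_left (ne_of_gt h5)
      exact pow_eq_zero_iff (n := 2) (by norm_num) |>.mp this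
  have hlpsum : Summable (fun x => g.μ x * |u x| ^ p) := by
    by_contra hns
    rw [show g.lpInt p u = 0 from tsum_eq_zero_of_not_summable hns] at heqN
    exact absurd heqN hepos.ne'
  refine ⟨?_, hsum2, hsumle, hlpsum⟩
  -- now the lower bound μmin ≤ e
  have hsumu2 : Summable (fun x => g.μ x * u x ^ 2) := by
    apply Summable.of_nonneg_of_le (fun x => by have := g.μpos x; positivity) _ hsum2
    intro x
    have h1 := le_of_lt (g.μpos x)
    have h3 := P.ha x
    nlinarith [sq_nonneg (u x), mul_nonneg (mul_nonneg hlam h3) (sq_nonneg (u x))]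
  have hsumu2le : (∑' x, g.μ x * u x ^ 2) ≤ e := by
    refine le_trans (Summable.tsum_le_tsum ?_ hsumu2 hsum2) hsumle
    intro x
    have h1 := le_of_lt (g.μpos x)
    have h3 := P.ha x
    nlinarith [sq_nonneg (u x), mul_nonneg (mul_nonneg hlam h3) (sq_nonneg (u x))]
  set D := Real.sqrt (e / μmin) with hD_def
  have hDnn : 0 ≤ D := Real.sqrt_nonneg _
  have hDb : ∀ x, |u x| ≤ D := by
    intro x
    have h1 : g.μ x * u x ^ 2 ≤ e := by
      refine le_trans (Summable.le_tsum hsumu2 x (fun j _ => by have := g.μpos j; positivity)) hsumu2le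
    have h2 : u x ^ 2 ≤ e / μmin := by
      rw [le_div_iff₀ P.hμmin]
      calc u x ^ 2 * μmin ≤ u x ^ 2 * g.μ x := by
            apply mul_le_mul_of_nonneg_left (P.hμ x) (sq_nonneg _)
        _ = g.μ x * u x ^ 2 := by ring
        _ ≤ e := h1
    calc |u x| = Real.sqrt (u x ^ 2) := (Real.sqrt_sq_eq_abs _).symm
      _ ≤ D := Real.sqrt_le_sqrt h2
  have hpe : ∀ x, g.μ x * |u x| ^ p ≤ D ^ (p - 2) * (g.μ x * u x ^ 2) := by
    intro x
    have := abs_rpow_le P.hp hDnn (hDb x)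
    have hμx := le_of_lt (g.μpos x)
    calc g.μ x * |u x| ^ p ≤ g.μ x * (D ^ (p-2) * u x ^ 2) := by
          apply mul_le_mul_of_nonneg_left this hμx
      _ = D ^ (p-2) * (g.μ x * u x ^ 2) := by ring
  have hchain : e ≤ D ^ (p - 2) * e := by
    calc e = g.lpInt p u := heqN
      _ = ∑' x, g.μ x * |u x| ^ p := rfl
      _ ≤ ∑' x, D ^ (p-2) * (g.μ x * u x ^ 2) := by
          apply Summable.tsum_le_tsum hpe hlpsum (hsumu2.mul_left _)
      _ = D ^ (p-2) * ∑' x, g.μ x * u x ^ 2 := tsum_mul_left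
      _ ≤ D ^ (p-2) * e := by
          apply mul_le_mul_of_nonneg_left hsumu2le (Real.rpow_nonneg hDnn _)
  have hD1 : 1 ≤ D ^ (p - 2) := by
    nlinarith [hepos]
  have hD1' : 1 ≤ D := by
    by_contra hlt
    push_neg at hlt
    have := Real.rpow_lt_one hDnn hlt (by linarith [P.hp] : (0:ℝ) < p - 2)
    linarith
  have : (1:ℝ) ≤ e / μmin := Real.one_le_sqrt.mp hD1'
  calc μmin = μmin * 1 := by ring
    _ ≤ μmin * (e/μmin) := by
        apply mul_le_mul_of_nonneg_left this (le_of_lt P.hμmin)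
    _ = e := by
        rw [mul_div_assoc']
        rw [mul_comm]
        exact mul_div_cancel_right₀ e (ne_of_gt P.hμmin)

end GraphData
end Mid2


section Mid3
namespace GraphData
variable {V : Type*} {g : GraphData V} {μmin C p : ℝ} {a : V → ℝ}

lemma NehariO_scale (P : Pack g μmin C p a) {u : V → ℝ} (hu0 : u ≠ 0)
    (hH : g.memH {x | a x = 0} u) :
    0 < g.lpIntO {x | a x = 0} p u ∧ 0 < g.hnormSq {x | a x = 0} u ∧
    (fun x => (g.hnormSq {x | a x = 0} u / g.lpIntO {x | a x = 0} p u) ^ ((1:ℝ)/(p-2)) * u x)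
      ∈ g.NehariO {x | a x = 0} p ∧
    g.JOmega {x | a x = 0} p
        (fun x => (g.hnormSq {x | a x = 0} u / g.lpIntO {x | a x = 0} p u) ^ ((1:ℝ)/(p-2)) * u x)
      = (1/2 - 1/p) * g.hnormSq {x | a x = 0} u
        * (g.hnormSq {x | a x = 0} u / g.lpIntO {x | a x = 0} p u) ^ ((2:ℝ)/(p-2)) := by
  classical
  have hp2 : (0:ℝ) < p - 2 := by linarith [P.hp]
  obtain ⟨x₀, hx₀⟩ : ∃ x, u x ≠ 0 := by
    by_contra hc; push_neg at hc; exact hu0 (funext hc)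
  have hx₀Ω : x₀ ∈ {x | a x = 0} := by
    by_contra hc; exact hx₀ (hH x₀ hc)
  have hx₀f : x₀ ∈ P.hΩfin.toFinset := by
    rw [Set.Finite.mem_toFinset]; exact hx₀Ω
  set l := g.lpIntO {x | a x = 0} p u with hl_def
  set h := g.hnormSq {x | a x = 0} u with hh_def
  have hlsum : l = ∑ x ∈ P.hΩfin.toFinset, g.μ x * |u x| ^ p :=
    tsum_subtype_eq_sum P.hΩfin (fun x => g.μ x * |u x| ^ p)
  have hlpos : 0 < l := by
    rw [hlsum]
    apply Finset.sum_pos' (fun i _ => by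
      have := g.μpos i
      have : (0:ℝ) ≤ |u i| ^ p := Real.rpow_nonneg (abs_nonneg _) _
      positivity)
    refine ⟨x₀, hx₀f, ?_⟩
    have h1 := g.μpos x₀
    have h2 : (0:ℝ) < |u x₀| ^ p := Real.rpow_pos_of_pos (abs_pos.mpr hx₀) _
    positivity
  have hBsum : (∑' x : {x | a x = 0}, g.μ (x:V) * u (x:V) ^ 2)
      = ∑ x ∈ P.hΩfin.toFinset, g.μ x * u x ^ 2 :=
    tsum_subtype_eq_sum P.hΩfin (fun x => g.μ x * u x ^ 2)
  have hBpos : 0 < ∑' x : {x | a x = 0}, g.μ (x:V) * u (x:V) ^ 2 := by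
    rw [hBsum]
    apply Finset.sum_pos' (fun i _ => by have := g.μpos i; positivity)
    refine ⟨x₀, hx₀f, ?_⟩
    have h1 := g.μpos x₀
    have h2 : 0 < u x₀ ^ 2 := by positivity
    positivity
  have hhpos : 0 < h := by
    rw [hh_def]
    unfold hnormSq
    have hA : 0 ≤ ∑' x : ↥({x | a x = 0} ∪ g.bdry {x | a x = 0}),
        g.μ (x:V) * ((g.lap u (x:V)) ^ 2 + g.grad u u (x:V)) := by
      apply tsum_nonneg
      intro x
      have := g.μpos (x:V)
      have := g.grad_nonneg u (x:V)
      positivity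
    have := hBpos
    linarith
  have hdivnn : (0:ℝ) ≤ h / l := le_of_lt (div_pos hhpos hlpos)
  set t := (h / l) ^ ((1:ℝ)/(p-2)) with ht_def
  have htpos : 0 < t := Real.rpow_pos_of_pos (div_pos hhpos hlpos) _
  -- scaled quantities
  have hnorm_scale : g.hnormSq {x | a x = 0} (fun x => t * u x) = t ^ 2 * h := by
    rw [hh_def]
    unfold hnormSq
    have e1 : ∀ x : ↥({x | a x = 0} ∪ g.bdry {x | a x = 0}),
        g.μ (x:V) * ((g.lap (fun y => t * u y) (x:V)) ^ 2
          + g.grad (fun y => t * u y) (fun y => t * u y) (x:V))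
        = t ^ 2 * (g.μ (x:V) * ((g.lap u (x:V)) ^ 2 + g.grad u u (x:V))) := by
      intro x
      rw [g.lap_smul, g.grad_smul]
      ring
    have e2 : ∀ x : {x | a x = 0},
        g.μ (x:V) * (t * u (x:V)) ^ 2 = t ^ 2 * (g.μ (x:V) * u (x:V) ^ 2) := by
      intro x; ring
    rw [tsum_congr e1, tsum_congr e2, tsum_mul_left, tsum_mul_left]
    ring
  have hlp_scale : g.lpIntO {x | a x = 0} p (fun x => t * u x) = t ^ p * l := by
    rw [hl_def]
    unfold lpIntO
    have e3 : ∀ x : {x | a x = 0},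
        g.μ (x:V) * |t * u (x:V)| ^ p = t ^ p * (g.μ (x:V) * |u (x:V)| ^ p) := by
      intro x
      rw [abs_mul, Real.mul_rpow (abs_nonneg t) (abs_nonneg _), abs_of_pos htpos]
      ring
    rw [tsum_congr e3, tsum_mul_left]
  have hpm2 : t ^ (p - 2) = h / l := by
    rw [ht_def, ← Real.rpow_mul hdivnn, one_div_mul_cancel (ne_of_gt hp2), Real.rpow_one]
  have htp : t ^ p = t ^ (p - 2) * t ^ 2 := by
    rw [← rpow_two' t, ← Real.rpow_add htpos]
    norm_num
  have hkey : t ^ p * l = t ^ 2 * h := by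
    rw [htp, hpm2]
    field_simp
  have ht2 : t ^ 2 = (h/l) ^ ((2:ℝ)/(p-2)) := by
    rw [← rpow_two' t, ht_def, ← Real.rpow_mul hdivnn]
    congr 1
    field_simp
  refine ⟨hlpos, hhpos, ⟨?_, ?_, ?_⟩, ?_⟩
  · intro hc
    have hcx := congrFun hc x₀
    simp only [Pi.zero_apply] at hcx
    exact hx₀ ((mul_eq_zero.mp hcx).resolve_left htpos.ne')
  · intro x hx
    show t * u x = 0
    rw [hH x hx, mul_zero]
  · rw [hnorm_scale, hlp_scale]
    exact hkey.symm
  · unfold JOmega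
    rw [hnorm_scale, hlp_scale, hkey, ← ht2]
    ring

end GraphData
end Mid3


section Mid4
namespace GraphData
variable {V : Type*} {g : GraphData V} {μmin C p : ℝ} {a : V → ℝ}

lemma alg {p μmin Kb s ε : ℝ} (hp : 2 < p) (hμ : 0 < μmin) (hs1 : μmin ≤ s) (hs2 : s ≤ Kb)
    (hε0 : 0 ≤ ε) (hε1 : ε ≤ μmin / 4) :
    (1/2 - 1/p) * (s + ε) * ((s + ε)/(s - ε)) ^ ((2:ℝ)/(p-2))
      ≤ (1/2 - 1/p) * s
        + ((1/2 - 1/p) * (1 + (Kb + μmin) * 3 ^ (⌈(2:ℝ)/(p-2)⌉₊) * 4 / μmin)) * ε := by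
  have hcp : (0:ℝ) < 1/2 - 1/p := by
    have := one_div_lt_one_div_of_lt (by norm_num : (0:ℝ) < 2) hp
    linarith
  set q := (2:ℝ)/(p-2) with hq_def
  have hq : 0 < q := by
    apply div_pos (by norm_num) (by linarith)
  set n := ⌈q⌉₊ with hn_def
  have hse : 0 < s - ε := by linarith
  have hse' : 3/4 * μmin ≤ s - ε := by linarith
  have hbase1 : 1 ≤ (s+ε)/(s-ε) := by
    rw [le_div_iff₀ hse]; linarith
  have hbase_eq : (s+ε)/(s-ε) = 1 + 2*ε/(s-ε) := by
    field_simp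
    ring
  have hx0 : 0 ≤ 2*ε/(s-ε) := by positivity
  have hxle : 2*ε/(s-ε) ≤ 4*ε/μmin := by
    rw [div_le_div_iff₀ hse hμ]
    nlinarith
  have hx1 : 2*ε/(s-ε) ≤ 1 := by
    have : 4*ε/μmin ≤ 1 := by
      rw [div_le_one hμ]; linarith
    linarith
  have h3n : (0:ℝ) ≤ 3 ^ n := by positivity
  have step1 : ((s+ε)/(s-ε)) ^ q ≤ ((s+ε)/(s-ε)) ^ (n:ℝ) :=
    Real.rpow_le_rpow_of_exponent_le hbase1 (Nat.le_ceil q)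
  have step2 : ((s+ε)/(s-ε)) ^ (n:ℝ) = ((s+ε)/(s-ε)) ^ n := Real.rpow_natCast _ n
  have step3 : ((s+ε)/(s-ε)) ^ n ≤ 1 + 3 ^ n * (2*ε/(s-ε)) := by
    rw [hbase_eq]
    exact pow_one_add_le n hx0 hx1
  have step4 : ((s+ε)/(s-ε)) ^ q ≤ 1 + 3 ^ n * (4*ε/μmin) := by
    calc ((s+ε)/(s-ε)) ^ q ≤ ((s+ε)/(s-ε)) ^ n := by rw [← step2]; exact step1
      _ ≤ 1 + 3 ^ n * (2*ε/(s-ε)) := step3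
      _ ≤ 1 + 3 ^ n * (4*ε/μmin) := by nlinarith
  have hsεnn : (0:ℝ) ≤ s + ε := by linarith
  have hfac : (0:ℝ) ≤ (1/2 - 1/p) * (s + ε) := by positivity
  calc (1/2 - 1/p) * (s + ε) * ((s + ε)/(s - ε)) ^ q
      ≤ (1/2 - 1/p) * (s + ε) * (1 + 3 ^ n * (4*ε/μmin)) :=
        mul_le_mul_of_nonneg_left step4 hfac
    _ = (1/2 - 1/p) * (s + ε) + (1/2 - 1/p) * (s + ε) * 3 ^ n * 4 * (ε/μmin) := by ring
    _ ≤ (1/2 - 1/p) * s + (1/2 - 1/p) * ε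
        + (1/2 - 1/p) * (Kb + μmin) * 3 ^ n * 4 * (ε/μmin) := by
        have hεμ : 0 ≤ ε/μmin := by positivity
        have hsK : s + ε ≤ Kb + μmin := by linarith
        have := mul_le_mul_of_nonneg_right
          (mul_le_mul_of_nonneg_left hsK (le_of_lt hcp)) (by positivity : (0:ℝ) ≤ 3^n * 4 * (ε/μmin))
        nlinarith
    _ = (1/2 - 1/p) * s
        + ((1/2 - 1/p) * (1 + (Kb + μmin) * 3 ^ n * 4 / μmin)) * ε := by
        field_simp
        ring

lemma mO_bddBelow (P : Pack g μmin C p a) (Ω : Set V) :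
    BddBelow (g.JOmega Ω p '' g.NehariO Ω p) := by
  refine ⟨0, ?_⟩
  rintro y ⟨w, hw, rfl⟩
  exact JOmega_nonneg P hw

lemma mO_nonneg (P : Pack g μmin C p a) (Ω : Set V) :
    0 ≤ sInf (g.JOmega Ω p '' g.NehariO Ω p) := by
  apply Real.sInf_nonneg
  rintro y ⟨w, hw, rfl⟩
  exact JOmega_nonneg P hw

lemma mO_le (P : Pack g μmin C p a) {u : V → ℝ} (hu0 : u ≠ 0)
    (hH : g.memH {x | a x = 0} u) :
    sInf (g.JOmega {x | a x = 0} p '' g.NehariO {x | a x = 0} p)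
      ≤ (1/2 - 1/p) * g.hnormSq {x | a x = 0} u
        * (g.hnormSq {x | a x = 0} u / g.lpIntO {x | a x = 0} p u) ^ ((2:ℝ)/(p-2)) := by
  obtain ⟨-, -, hmem, hval⟩ := NehariO_scale P hu0 hH
  exact csInf_le (mO_bddBelow P _) ⟨_, hmem, hval⟩

lemma NehariO_nonempty (P : Pack g μmin C p a) :
    (g.NehariO {x | a x = 0} p).Nonempty := by
  classical
  obtain ⟨x₁, hx₁⟩ := P.hΩne
  set u₁ : V → ℝ := fun x => if x = x₁ then (1:ℝ) else 0 with hu₁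
  have hu0 : u₁ ≠ 0 := by
    intro hc
    have := congrFun hc x₁
    simp [hu₁] at this
  have hH : g.memH {x | a x = 0} u₁ := by
    intro x hx
    have : x ≠ x₁ := fun h => hx (h ▸ hx₁)
    simp [hu₁, this]
  obtain ⟨-, -, hmem, -⟩ := NehariO_scale P hu0 hH
  exact ⟨_, hmem⟩

lemma Nehari_nonempty (P : Pack g μmin C p a) (lam : ℝ) :
    (g.Nehari a lam p).Nonempty := by
  obtain ⟨u, hu⟩ := NehariO_nonempty P
  exact ⟨u, (NehariO_subset P lam hu).1⟩

lemma part1 (P : Pack g μmin C p a) {lam : ℝ} (hlam : 0 ≤ lam) :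
    sInf (g.Jlam a lam p '' g.Nehari a lam p)
      ≤ sInf (g.JOmega {x | a x = 0} p '' g.NehariO {x | a x = 0} p) := by
  apply csInf_le_csInf
  · refine ⟨0, ?_⟩
    rintro y ⟨w, hw, rfl⟩
    exact Jlam_nonneg P hlam hw
  · exact (NehariO_nonempty P).image _
  · rintro y ⟨w, hw, rfl⟩
    obtain ⟨hmem, heq⟩ := NehariO_subset P lam hw
    exact ⟨w, hmem, heq⟩

end GraphData
end Mid4


section Mid5
namespace GraphData
variable {V : Type*} {g : GraphData V} {μmin C p : ℝ} {a : V → ℝ}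

private lemma aux1 {m lam av t : ℝ} (hm : 0 ≤ m) (hlam : 0 ≤ lam) (hav : 0 ≤ av) :
    m * t ^ 2 ≤ m * ((lam * av + 1) * t ^ 2) := by
  nlinarith [mul_nonneg (mul_nonneg hlam hav) (sq_nonneg t), mul_nonneg hm (mul_nonneg (mul_nonneg hlam hav) (sq_nonneg t))]

private lemma aux2 {m lam d av t : ℝ} (hm : 0 ≤ m) (hlam : 1 ≤ lam) (hd : 0 < d)
    (hdav : d ≤ av) : lam * d * (m * t ^ 2) ≤ m * ((lam * av + 1) * t ^ 2) := by
  have h1 : lam * d ≤ lam * av := mul_le_mul_of_nonneg_left hdav (by linarith)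
  have h2 : lam * d * (m * t^2) ≤ lam * av * (m * t^2) :=
    mul_le_mul_of_nonneg_right h1 (mul_nonneg hm (sq_nonneg t))
  nlinarith [mul_nonneg hm (sq_nonneg t)]

set_option maxHeartbeats 1600000 in
lemma main_lower (P : Pack g μmin C p a) :
    ∃ C₁ : ℝ, 0 ≤ C₁ ∧ ∃ lam₀ : ℝ, 1 ≤ lam₀ ∧ ∀ lam : ℝ, lam₀ ≤ lam →
      sInf (g.JOmega {x | a x = 0} p '' g.NehariO {x | a x = 0} p) - C₁ * Real.sqrt (1/lam)
        ≤ sInf (g.Jlam a lam p '' g.Nehari a lam p) := by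
  classical
  have hcp := P.hcp
  have hC := P.hC
  have hμm := P.hμmin
  set mO := sInf (g.JOmega {x | a x = 0} p '' g.NehariO {x | a x = 0} p) with hmO_def
  have hmOnn : 0 ≤ mO := mO_nonneg P _
  set K := mO / (1/2 - 1/p) with hK_def
  have hKnn : 0 ≤ K := div_nonneg hmOnn (le_of_lt hcp)
  set B := Real.sqrt (K / μmin) with hB_def
  have hBnn : 0 ≤ B := Real.sqrt_nonneg _
  set L1 := 2*C*B/μmin with hL1_def
  set L2 := 2*C/μmin with hL2_def
  have hL1nn : 0 ≤ L1 := by rw [hL1_def]; positivity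
  have hL2nn : 0 ≤ L2 := by rw [hL2_def]; positivity
  set Cv := 2*L1*L2 + L2^2 + 2*L1 + L2 with hCv_def
  have hCvnn : 0 ≤ Cv := by rw [hCv_def]; positivity
  set Mμ := ∑ x ∈ P.hS1fin.toFinset, g.μ x with hMμ_def
  have hMμnn : 0 ≤ Mμ := Finset.sum_nonneg (fun x _ => le_of_lt (g.μpos x))
  have hBp2nn : (0:ℝ) ≤ B ^ (p-2) := Real.rpow_nonneg hBnn _
  have hBμnn : 0 ≤ B^(p-2)*μmin := mul_nonneg hBp2nn (le_of_lt hμm)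
  set Cε := Mμ*Cv + B^(p-2)*μmin + 1 with hCε_def
  have hCεpos : 0 < Cε := by
    rw [hCε_def]
    linarith only [mul_nonneg hMμnn hCvnn, hBμnn]
  set θ₀ := min 1 (μmin/(4*Cε)) with hθ₀_def
  have hθ₀pos : 0 < θ₀ := by
    rw [hθ₀_def]
    apply lt_min one_pos
    positivity
  have hθ₀1 : θ₀ ≤ 1 := min_le_left _ _
  have hθ₀2 : θ₀ ≤ μmin/(4*Cε) := min_le_right _ _
  set Cθ := Real.sqrt (K/(P.δ*μmin)) with hCθ_def
  have hCθnn : 0 ≤ Cθ := Real.sqrt_nonneg _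
  set Calg := ((1/2 - 1/p) * (1 + (K + μmin) * 3 ^ (⌈(2:ℝ)/(p-2)⌉₊) * 4 / μmin)) with hCalg_def
  have hCalgnn : 0 ≤ Calg := by
    rw [hCalg_def]
    have h1 : (0:ℝ) ≤ (K + μmin) * 3 ^ (⌈(2:ℝ)/(p-2)⌉₊) * 4 / μmin := by positivity
    have h2 : (0:ℝ) ≤ 1 + (K + μmin) * 3 ^ (⌈(2:ℝ)/(p-2)⌉₊) * 4 / μmin := by
      linarith only [h1]
    exact mul_nonneg (le_of_lt hcp) h2
  clear_value mO K B L1 L2 Cv Mμ Cε θ₀ Cθ Calg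
  refine ⟨Calg * Cε * Cθ, mul_nonneg (mul_nonneg hCalgnn (le_of_lt hCεpos)) hCθnn,
    max 1 ((Cθ+1)^2/θ₀^2), le_max_left _ _, ?_⟩
  intro lam hlam
  have hlam1 : (1:ℝ) ≤ lam := le_trans (le_max_left _ _) hlam
  have hlampos : 0 < lam := by linarith only [hlam1]
  have hlamnn : 0 ≤ lam := by linarith only [hlam1]
  have hinvnn : (0:ℝ) ≤ 1/lam := by positivity
  set θ := Cθ * Real.sqrt (1/lam) with hθ_def
  clear_value θ
  have hθnn : 0 ≤ θ := by rw [hθ_def]; positivity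
  have hθθ₀ : θ ≤ θ₀ := by
    have hlam2 : (Cθ+1)^2/θ₀^2 ≤ lam := le_trans (le_max_right _ _) hlam
    have h1 : 1/lam ≤ θ₀^2/(Cθ+1)^2 := by
      rw [div_le_div_iff₀ hlampos (by positivity)]
      calc 1 * (Cθ+1)^2 = ((Cθ+1)^2/θ₀^2) * θ₀^2 := by
            field_simp
        _ ≤ lam * θ₀^2 := mul_le_mul_of_nonneg_right hlam2 (sq_nonneg _)
        _ = θ₀^2 * lam := by ring
    have h2 : Real.sqrt (1/lam) ≤ θ₀/(Cθ+1) := by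
      calc Real.sqrt (1/lam) ≤ Real.sqrt (θ₀^2/(Cθ+1)^2) := Real.sqrt_le_sqrt h1
        _ = Real.sqrt ((θ₀/(Cθ+1))^2) := by rw [div_pow]
        _ = θ₀/(Cθ+1) := Real.sqrt_sq (by positivity)
    calc θ = Cθ * Real.sqrt (1/lam) := hθ_def
      _ ≤ Cθ * (θ₀/(Cθ+1)) := mul_le_mul_of_nonneg_left h2 hCθnn
      _ = θ₀ * (Cθ/(Cθ+1)) := by ring
      _ ≤ θ₀ := by
          have h4 : Cθ/(Cθ+1) ≤ 1 := by
            rw [div_le_one (by positivity)]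
            linarith only [hCθnn]
          exact mul_le_of_le_one_right (le_of_lt hθ₀pos) h4
  have hθ1 : θ ≤ 1 := le_trans hθθ₀ hθ₀1
  have hθsq' : θ^2 ≤ θ := by nlinarith [hθnn, hθ1]
  -- now bound each element of the image
  apply le_csInf ((Nehari_nonempty P lam).image _)
  rintro b ⟨u, hu, rfl⟩
  by_cases hcase : mO ≤ g.Jlam a lam p u
  · have h0 : 0 ≤ Calg * Cε * Cθ * Real.sqrt (1/lam) := by positivity
    linarith only [hcase, h0]
  push_neg at hcase
  have hJ : g.Jlam a lam p u = (1/2-1/p) * g.enormSq a lam u := Jlam_eq hu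
  obtain ⟨hsmin, hsum2, hsum2le, hlpsum⟩ := nehari_lower P hlamnn hu
  obtain ⟨hu0, hE, heqN⟩ := hu
  set s := g.enormSq a lam u with hs_def
  have hsK : s ≤ K := by
    rw [hK_def, le_div_iff₀ hcp]
    rw [hJ] at hcase
    linarith only [hcase]
  -- tail sum T
  set w2 : V → ℝ := fun x => if a x = 0 then (0:ℝ) else g.μ x * u x ^ 2 with hw2_def
  have hw2nn : ∀ x, 0 ≤ w2 x := by
    intro x
    rw [hw2_def]
    by_cases hax : a x = 0 <;> simp [hax]
    have := g.μpos x; positivity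
  have hw2le : ∀ x, w2 x ≤ g.μ x * ((lam * a x + 1) * u x ^ 2) := by
    intro x
    rw [hw2_def]
    by_cases hax : a x = 0 <;> simp only [hax, if_true, if_false]
    · have h1 := g.μpos x
      have h2 := P.ha x
      positivity
    · exact aux1 (le_of_lt (g.μpos x)) hlamnn (P.ha x)
  have hw2sum : Summable w2 := Summable.of_nonneg_of_le hw2nn hw2le hsum2
  set T := ∑' x, w2 x with hT_def
  have hTnn : 0 ≤ T := tsum_nonneg hw2nn
  have hTle : lam * P.δ * T ≤ s := by
    have h1 : ∀ x, lam * P.δ * w2 x ≤ g.μ x * ((lam * a x + 1) * u x ^ 2) := by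
      intro x
      rw [hw2_def]
      by_cases hax : a x = 0 <;> simp only [hax, if_true, if_false]
      · rw [mul_zero]
        have h2 := g.μpos x
        have h3 := P.ha x
        positivity
      · exact aux2 (le_of_lt (g.μpos x)) hlam1 P.hδpos (P.hδ x hax)
    calc lam * P.δ * T = ∑' x, lam * P.δ * w2 x := tsum_mul_left.symm
      _ ≤ ∑' x, g.μ x * ((lam * a x + 1) * u x ^ 2) :=
          Summable.tsum_le_tsum h1 (hw2sum.mul_left _) hsum2
      _ ≤ s := hsum2le
  have hδp := P.hδpos
  have hTK : T ≤ K / (lam * P.δ) := by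
    rw [le_div_iff₀ (by positivity)]
    calc T * (lam * P.δ) = lam * P.δ * T := by ring
      _ ≤ s := hTle
      _ ≤ K := hsK
  have hθsq : μmin * θ^2 = K / (lam * P.δ) := by
    rw [hθ_def, mul_pow, Real.sq_sqrt hinvnn, hCθ_def, Real.sq_sqrt (by positivity)]
    field_simp
  have hTθ : T ≤ μmin * θ^2 := by rw [hθsq]; exact hTK
  -- pointwise bounds
  have hBbound : ∀ x, |u x| ≤ B := by
    intro x
    have c1 : μmin * u x ^ 2 ≤ g.μ x * u x ^ 2 :=
      mul_le_mul_of_nonneg_right (P.hμ x) (sq_nonneg _)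
    have c2 : g.μ x * u x ^ 2 ≤ g.μ x * ((lam * a x + 1) * u x ^ 2) :=
      aux1 (le_of_lt (g.μpos x)) hlamnn (P.ha x)
    have c3 : g.μ x * ((lam * a x + 1) * u x ^ 2) ≤ s :=
      le_trans (Summable.le_tsum hsum2 x (fun j _ => by
        have := g.μpos j; have := P.ha j; positivity)) hsum2le
    have h3 : u x ^ 2 ≤ K / μmin := by
      rw [le_div_iff₀ hμm]
      linarith only [c1, c2, c3, hsK]
    calc |u x| = Real.sqrt (u x ^ 2) := (Real.sqrt_sq_eq_abs _).symm
      _ ≤ B := by rw [hB_def]; exact Real.sqrt_le_sqrt h3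
  have hθbound : ∀ x, a x ≠ 0 → |u x| ≤ θ := by
    intro x hax
    have h1 : g.μ x * u x ^ 2 ≤ T := by
      have h2 := Summable.le_tsum hw2sum x (fun j _ => hw2nn j)
      rw [hw2_def] at h2
      simpa [hax] using h2
    have c1 : μmin * u x ^ 2 ≤ g.μ x * u x ^ 2 :=
      mul_le_mul_of_nonneg_right (P.hμ x) (sq_nonneg _)
    have h3 : u x ^ 2 ≤ θ^2 := by
      have h4 : μmin * u x ^ 2 ≤ μmin * θ^2 := by linarith only [c1, h1, hTθ]
      exact le_of_mul_le_mul_left h4 hμm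
    calc |u x| = Real.sqrt (u x ^ 2) := (Real.sqrt_sq_eq_abs _).symm
      _ ≤ Real.sqrt (θ^2) := Real.sqrt_le_sqrt h3
      _ = θ := Real.sqrt_sq hθnn
  -- v and wf
  set v : V → ℝ := fun x => if a x = 0 then u x else 0 with hv_def
  set wf : V → ℝ := fun x => if a x = 0 then (0:ℝ) else u x with hwf_def
  have hveq : v = fun y => u y - wf y := by
    funext x
    rw [hv_def, hwf_def]
    by_cases hax : a x = 0 <;> simp [hax]
  have hwfb : ∀ x, |wf x| ≤ θ := by
    intro x
    rw [hwf_def]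
    by_cases hax : a x = 0 <;> simp [hax]
    · exact hθnn
    · exact hθbound x hax
  have hvb : ∀ x, |v x| ≤ B := by
    intro x
    rw [hv_def]
    by_cases hax : a x = 0 <;> simp [hax]
    · exact hBbound x
    · exact hBnn
  have hvH : g.memH {x | a x = 0} v := by
    intro x hx
    rw [hv_def]
    simp only [Set.mem_setOf_eq] at hx
    simp [hx]
  -- per-vertex estimates
  have hlapu : ∀ x, |g.lap u x| ≤ L1 := by
    intro x
    have h := g.lap_bound μmin C hμm P.hμ P.hω hBnn hBbound x
    rw [hL1_def]
    exact h
  have hlapw : ∀ x, |g.lap wf x| ≤ L2 * θ := by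
    intro x
    have h := g.lap_bound μmin C hμm P.hμ P.hω hθnn hwfb x
    calc |g.lap wf x| ≤ 2*C*θ/μmin := h
      _ = L2 * θ := by rw [hL2_def]; ring
  have hgraduw : ∀ x, |g.grad u wf x| ≤ L1 * θ := by
    intro x
    have h := g.grad_bound μmin C hμm P.hμ P.hω hBnn hθnn hBbound hwfb x
    calc |g.grad u wf x| ≤ 2*C*B*θ/μmin := h
      _ = L1 * θ := by rw [hL1_def]; ring
  have hgradww : ∀ x, |g.grad wf wf x| ≤ L2 * θ := by
    intro x
    have h := g.grad_bound μmin C hμm P.hμ P.hω hθnn hθnn hwfb hwfb x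
    have h5 : θ*θ ≤ θ := by rw [← pow_two]; exact hθsq' 
    calc |g.grad wf wf x| ≤ 2*C*θ*θ/μmin := h
      _ = L2 * (θ*θ) := by rw [hL2_def]; ring
      _ ≤ L2 * θ := mul_le_mul_of_nonneg_left h5 hL2nn
  have hvert : ∀ x, (g.lap v x)^2 + g.grad v v x
      ≤ (g.lap u x)^2 + g.grad u u x + Cv*θ := by
    intro x
    have hlv : g.lap v x = g.lap u x - g.lap wf x := by
      rw [hveq, g.lap_sub]
    have hgv : g.grad v v x = g.grad u u x - 2 * g.grad u wf x + g.grad wf wf x := by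
      rw [hveq, g.grad_sub_sub]
    rw [hlv, hgv]
    have e1 : -(g.lap u x * g.lap wf x) ≤ L1*(L2*θ) := by
      calc -(g.lap u x * g.lap wf x) ≤ |g.lap u x * g.lap wf x| := neg_le_abs _
        _ = |g.lap u x| * |g.lap wf x| := abs_mul _ _
        _ ≤ L1*(L2*θ) := mul_le_mul (hlapu x) (hlapw x) (abs_nonneg _) hL1nn
    have e2 : (g.lap wf x)^2 ≤ L2^2 * θ := by
      have h1 : (g.lap wf x)^2 ≤ (L2*θ)^2 := by
        rw [← sq_abs]
        exact pow_le_pow_left₀ (abs_nonneg _) (hlapw x) 2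
      have h2 : (L2*θ)^2 = L2^2*θ^2 := by ring
      have h3 : L2^2*θ^2 ≤ L2^2*θ := mul_le_mul_of_nonneg_left hθsq' (sq_nonneg L2)
      linarith only [h1, h2, h3]
    have e3 : -(g.grad u wf x) ≤ L1*θ := le_trans (neg_le_abs _) (hgraduw x)
    have e4 : g.grad wf wf x ≤ L2*θ := le_trans (le_abs_self _) (hgradww x)
    have hexp : (g.lap u x - g.lap wf x)^2
        = (g.lap u x)^2 - 2*(g.lap u x * g.lap wf x) + (g.lap wf x)^2 := by ring
    rw [hexp, hCv_def]
    linarith only [e1, e2, e3, e4]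
  -- finset sums
  have hsub : P.hΩfin.toFinset ⊆ P.hS1fin.toFinset := by
    intro x hx
    rw [Set.Finite.mem_toFinset] at hx ⊢
    exact Or.inl hx
  have hhv : g.hnormSq {x | a x = 0} v
      = ∑ x ∈ P.hS1fin.toFinset, g.μ x * ((g.lap v x)^2 + g.grad v v x)
        + ∑ x ∈ P.hΩfin.toFinset, g.μ x * v x ^ 2 := by
    unfold hnormSq
    rw [tsum_subtype_eq_sum P.hS1fin (fun x => g.μ x * ((g.lap v x)^2 + g.grad v v x)),
      tsum_subtype_eq_sum P.hΩfin (fun x => g.μ x * v x ^ 2)]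
  have hsum_v : ∑ x ∈ P.hS1fin.toFinset, g.μ x * ((g.lap v x)^2 + g.grad v v x)
      ≤ ∑ x ∈ P.hS1fin.toFinset, g.μ x * ((g.lap u x)^2 + g.grad u u x) + Mμ*(Cv*θ) := by
    have h1 : ∑ x ∈ P.hS1fin.toFinset, g.μ x * ((g.lap v x)^2 + g.grad v v x)
        ≤ ∑ x ∈ P.hS1fin.toFinset,
            (g.μ x * ((g.lap u x)^2 + g.grad u u x) + g.μ x * (Cv*θ)) := by
      apply Finset.sum_le_sum
      intro x _
      have h2 := mul_le_mul_of_nonneg_left (hvert x) (le_of_lt (g.μpos x))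
      linarith only [h2]
    rw [Finset.sum_add_distrib, ← Finset.sum_mul] at h1
    rw [hMμ_def]
    exact h1
  have htermnn : ∀ x, 0 ≤ g.μ x * ((g.lap u x) ^ 2 + g.grad u u x + (lam * a x + 1) * (u x) ^ 2) := by
    intro x
    have h1 := g.μpos x
    have h2 := g.grad_nonneg u x
    have h3 := P.ha x
    positivity
  have hGle : ∑ x ∈ P.hS1fin.toFinset, g.μ x * ((g.lap u x)^2 + g.grad u u x)
      + ∑ x ∈ P.hΩfin.toFinset, g.μ x * u x ^ 2 ≤ s := by
    have hmem : ∀ x, x ∈ P.hΩfin.toFinset ↔ a x = 0 := by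
      intro x
      rw [Set.Finite.mem_toFinset]
      exact Iff.rfl
    have hsum_ite : ∑ x ∈ P.hS1fin.toFinset, (if x ∈ P.hΩfin.toFinset then g.μ x * u x ^ 2 else 0)
        = ∑ x ∈ P.hΩfin.toFinset, g.μ x * u x ^ 2 := by
      rw [Finset.sum_ite_mem, Finset.inter_eq_right.mpr hsub]
    have hcomb : ∑ x ∈ P.hS1fin.toFinset, g.μ x * ((g.lap u x)^2 + g.grad u u x)
        + ∑ x ∈ P.hΩfin.toFinset, g.μ x * u x ^ 2
        = ∑ x ∈ P.hS1fin.toFinset,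
            (g.μ x * ((g.lap u x)^2 + g.grad u u x)
              + (if x ∈ P.hΩfin.toFinset then g.μ x * u x ^ 2 else 0)) := by
      rw [Finset.sum_add_distrib, hsum_ite]
    rw [hcomb]
    calc ∑ x ∈ P.hS1fin.toFinset,
            (g.μ x * ((g.lap u x)^2 + g.grad u u x)
              + (if x ∈ P.hΩfin.toFinset then g.μ x * u x ^ 2 else 0))
        ≤ ∑ x ∈ P.hS1fin.toFinset,
            g.μ x * ((g.lap u x) ^ 2 + g.grad u u x + (lam * a x + 1) * (u x) ^ 2) := by
          apply Finset.sum_le_sum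
          intro x _
          by_cases hax : a x = 0
          · rw [if_pos ((hmem x).mpr hax), hax]
            apply le_of_eq
            ring
          · rw [if_neg (fun hmem' => hax ((hmem x).mp hmem'))]
            have h4 : 0 ≤ g.μ x * ((lam * a x + 1) * u x ^ 2) := by
              have h1 := g.μpos x
              have h3 := P.ha x
              positivity
            linarith only [h4]
      _ ≤ ∑' x, g.μ x * ((g.lap u x) ^ 2 + g.grad u u x + (lam * a x + 1) * (u x) ^ 2) :=
          Summable.sum_le_tsum _ (fun x _ => htermnn x) hE
      _ = s := rfl
  have hvΩ : ∑ x ∈ P.hΩfin.toFinset, g.μ x * v x ^ 2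
      = ∑ x ∈ P.hΩfin.toFinset, g.μ x * u x ^ 2 := by
    apply Finset.sum_congr rfl
    intro x hx
    rw [Set.Finite.mem_toFinset, Set.mem_setOf_eq] at hx
    rw [hv_def]
    simp [hx]
  have hhvle : g.hnormSq {x | a x = 0} v ≤ s + Mμ*(Cv*θ) := by
    rw [hhv, hvΩ]
    linarith only [hsum_v, hGle]
  -- lower bound for lpIntO of v
  have hlv : g.lpIntO {x | a x = 0} p v = ∑ x ∈ P.hΩfin.toFinset, g.μ x * |u x| ^ p := by
    rw [show g.lpIntO {x | a x = 0} p v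
        = ∑ x ∈ P.hΩfin.toFinset, g.μ x * |v x| ^ p from
      tsum_subtype_eq_sum P.hΩfin (fun x => g.μ x * |v x| ^ p)]
    apply Finset.sum_congr rfl
    intro x hx
    rw [Set.Finite.mem_toFinset, Set.mem_setOf_eq] at hx
    rw [hv_def]
    simp [hx]
  have hltail : s ≤ ∑ x ∈ P.hΩfin.toFinset, g.μ x * |u x| ^ p + B^(p-2) * T := by
    set h2f : V → ℝ := fun x => (if a x = 0 then g.μ x * |u x| ^ p else 0) + B^(p-2) * w2 x
      with hh2_def
    have hfirst_sum : Summable (fun x => if a x = 0 then g.μ x * |u x| ^ p else 0) := by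
      apply summable_of_ne_finset_zero (s := P.hΩfin.toFinset)
      intro x hx
      rw [Set.Finite.mem_toFinset, Set.mem_setOf_eq] at hx
      simp [hx]
    have hsumh2 : Summable h2f := hfirst_sum.add (hw2sum.mul_left _)
    have hpt : ∀ x, g.μ x * |u x| ^ p ≤ h2f x := by
      intro x
      rw [hh2_def]
      show g.μ x * |u x| ^ p
        ≤ (if a x = 0 then g.μ x * |u x| ^ p else 0) + B ^ (p - 2) * w2 x
      by_cases hax : a x = 0
      · simp only [hax, if_true]
        have h5 : 0 ≤ B^(p-2) * w2 x := mul_nonneg hBp2nn (hw2nn x)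
        linarith only [h5]
      · have hw2x : w2 x = g.μ x * u x ^ 2 := by rw [hw2_def]; simp [hax]
        rw [if_neg hax, hw2x]
        have h3 := abs_rpow_le P.hp hBnn (hBbound x)
        have hμx := le_of_lt (g.μpos x)
        calc g.μ x * |u x| ^ p ≤ g.μ x * (B^(p-2) * u x ^ 2) :=
              mul_le_mul_of_nonneg_left h3 hμx
          _ = 0 + B^(p-2) * (g.μ x * u x ^ 2) := by ring
    have hfirst_eq : (∑' x, (if a x = 0 then g.μ x * |u x| ^ p else 0))
        = ∑ x ∈ P.hΩfin.toFinset, g.μ x * |u x| ^ p := by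
      rw [tsum_eq_sum (s := P.hΩfin.toFinset)]
      · apply Finset.sum_congr rfl
        intro x hx
        rw [Set.Finite.mem_toFinset, Set.mem_setOf_eq] at hx
        simp [hx]
      · intro x hx
        rw [Set.Finite.mem_toFinset, Set.mem_setOf_eq] at hx
        simp [hx]
    calc s = g.lpInt p u := heqN
      _ = ∑' x, g.μ x * |u x| ^ p := rfl
      _ ≤ ∑' x, h2f x := Summable.tsum_le_tsum hpt hlpsum hsumh2
      _ = (∑' x, (if a x = 0 then g.μ x * |u x| ^ p else 0)) + ∑' x, B^(p-2) * w2 x :=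
          Summable.tsum_add hfirst_sum (hw2sum.mul_left _)
      _ = ∑ x ∈ P.hΩfin.toFinset, g.μ x * |u x| ^ p + B^(p-2) * T := by
          rw [hfirst_eq, tsum_mul_left]
  -- epsilon bookkeeping
  set ε := Cε * θ with hε_def
  have hε0 : 0 ≤ ε := mul_nonneg (le_of_lt hCεpos) hθnn
  have hεle : ε ≤ μmin/4 := by
    have h1 : θ ≤ μmin/(4*Cε) := le_trans hθθ₀ hθ₀2
    calc ε = Cε * θ := hε_def
      _ ≤ Cε * (μmin/(4*Cε)) := mul_le_mul_of_nonneg_left h1 (le_of_lt hCεpos)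
      _ = μmin/4 := by
          field_simp
  have hMCv : Mμ*(Cv*θ) ≤ ε := by
    have h1 : Mμ*Cv ≤ Cε := by
      rw [hCε_def]
      linarith only [hBμnn]
    calc Mμ*(Cv*θ) = (Mμ*Cv)*θ := by ring
      _ ≤ Cε*θ := mul_le_mul_of_nonneg_right h1 hθnn
      _ = ε := hε_def.symm
  have hBT : B^(p-2) * T ≤ ε := by
    have h1 : B^(p-2) * T ≤ B^(p-2) * (μmin*θ^2) := mul_le_mul_of_nonneg_left hTθ hBp2nn
    have hb : B^(p-2)*μmin*(θ^2) ≤ B^(p-2)*μmin*θ := mul_le_mul_of_nonneg_left hθsq' hBμnn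
    have h3 : B^(p-2)*μmin ≤ Cε := by
      rw [hCε_def]
      linarith only [mul_nonneg hMμnn hCvnn]
    calc B^(p-2)*T ≤ B^(p-2) * (μmin*θ^2) := h1
      _ = B^(p-2)*μmin*(θ^2) := by ring
      _ ≤ B^(p-2)*μmin*θ := hb
      _ ≤ Cε*θ := mul_le_mul_of_nonneg_right h3 hθnn
      _ = ε := hε_def.symm
  have hhle : g.hnormSq {x | a x = 0} v ≤ s + ε := by
    linarith only [hhvle, hMCv]
  have hlge : s - ε ≤ g.lpIntO {x | a x = 0} p v := by
    rw [hlv]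
    linarith only [hltail, hBT]
  have hsε : 0 < s - ε := by linarith only [hsmin, hεle, hμm]
  have hlpos : 0 < g.lpIntO {x | a x = 0} p v := lt_of_lt_of_le hsε hlge
  have hv0 : v ≠ 0 := by
    intro hc
    have hzv : g.lpIntO {x | a x = 0} p v = 0 := by
      rw [hc]
      unfold lpIntO
      have hz : ∀ x : {x | a x = 0}, g.μ (x:V) * |(0:V→ℝ) (x:V)| ^ p = 0 := by
        intro x
        simp [Real.zero_rpow (by linarith only [P.hp] : p ≠ 0)]
      rw [tsum_congr hz, tsum_zero]
    exact absurd hzv (ne_of_gt hlpos)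
  have hstep := mO_le P hv0 hvH
  rw [← hmO_def] at hstep
  have hq0 : (0:ℝ) ≤ (2:ℝ)/(p-2) := by
    have h5 : (0:ℝ) < p - 2 := by linarith only [P.hp]
    positivity
  have hnvnn : 0 ≤ g.hnormSq {x | a x = 0} v := hnormSq_nonneg g _ v
  have hsεnn : (0:ℝ) ≤ s + ε := by linarith only [hsmin, hε0, hμm]
  have hdivle : g.hnormSq {x | a x = 0} v / g.lpIntO {x | a x = 0} p v ≤ (s+ε)/(s-ε) :=
    div_le_div₀ hsεnn hhle hsε hlge
  have hrle : (g.hnormSq {x | a x = 0} v / g.lpIntO {x | a x = 0} p v) ^ ((2:ℝ)/(p-2))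
      ≤ ((s+ε)/(s-ε)) ^ ((2:ℝ)/(p-2)) :=
    Real.rpow_le_rpow (div_nonneg hnvnn (le_of_lt hlpos)) hdivle hq0
  have hmono : (1/2-1/p) * g.hnormSq {x | a x = 0} v
        * (g.hnormSq {x | a x = 0} v / g.lpIntO {x | a x = 0} p v) ^ ((2:ℝ)/(p-2))
      ≤ (1/2-1/p) * (s+ε) * ((s+ε)/(s-ε)) ^ ((2:ℝ)/(p-2)) := by
    apply mul_le_mul
    · exact mul_le_mul_of_nonneg_left hhle (le_of_lt hcp)
    · exact hrle
    · exact Real.rpow_nonneg (div_nonneg hnvnn (le_of_lt hlpos)) _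
    · exact mul_nonneg (le_of_lt hcp) hsεnn
  have halg := alg P.hp hμm hsmin hsK hε0 hεle
  have hfinal : mO ≤ (1/2-1/p)*s + Calg * ε := by
    calc mO ≤ _ := hstep
      _ ≤ _ := hmono
      _ ≤ (1/2-1/p)*s + Calg*ε := by
          rw [hCalg_def]
          exact halg
  have hCε_eq : Calg * ε = Calg * Cε * Cθ * Real.sqrt (1/lam) := by
    rw [hε_def, hθ_def]
    ring
  rw [hJ]
  linarith only [hfinal, hCε_eq]

end GraphData
end Mid5


/-- m_λ ≤ m_Ω for all λ > 1, and m_λ → m_Ω as λ → ∞. -/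
theorem stmt12 (g : GraphData V) (μmin C p : ℝ) (hμmin : 0 < μmin)
    (hμ : ∀ x, μmin ≤ g.μ x) (hω : ∀ x, ∑' y, g.ω x y ≤ C) (hconn : g.G.Connected)
    (a : V → ℝ) (ha : ∀ x, 0 ≤ a x)
    (hΩne : {x | a x = 0}.Nonempty)
    (hΩbd : ∃ D : ℕ, ∀ x ∈ {x | a x = 0}, ∀ y ∈ {x | a x = 0}, g.G.dist x y ≤ D)
    (hΩconn : (g.G.induce {x | a x = 0}).Connected)
    (x₀ : V) (hainf : ∀ M : ℝ, ∃ R : ℕ, ∀ x, R ≤ g.G.dist x x₀ → M ≤ a x)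
    (hp : 2 < p) :
    (∀ lam : ℝ, 1 < lam →
      sInf (g.Jlam a lam p '' g.Nehari a lam p)
        ≤ sInf (g.JOmega {x | a x = 0} p '' g.NehariO {x | a x = 0} p))
    ∧ Filter.Tendsto (fun lam => sInf (g.Jlam a lam p '' g.Nehari a lam p))
        Filter.atTop
        (nhds (sInf (g.JOmega {x | a x = 0} p '' g.NehariO {x | a x = 0} p))) := by
  classical
  have hnbrfin : ∀ x : V, (g.G.neighborSet x).Finite := by
    intro x
    apply Set.Finite.subset (g.locfin x)
    intro y hy
    exact ne_of_gt hy
  obtain ⟨D, hD⟩ := hΩbd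
  obtain ⟨x₁, hx₁⟩ := hΩne
  have hΩfin : {x | a x = 0}.Finite := by
    apply Set.Finite.subset (finite_ball g.G hnbrfin x₁ D)
    intro y hy
    have hreach : g.G.Reachable x₁ y := hconn.preconnected x₁ y
    obtain ⟨w, hw⟩ := hreach.exists_walk_length_eq_dist
    exact ⟨w, by rw [hw]; exact hD x₁ hx₁ y hy⟩
  have hbdryfin : (g.bdry {x | a x = 0}).Finite := by
    apply Set.Finite.subset (Set.Finite.biUnion hΩfin (fun z _ => hnbrfin z))
    rintro y ⟨hyΩ, x, hxΩ, hωxy⟩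
    exact Set.mem_biUnion hxΩ hωxy
  have hS1fin : ({x | a x = 0} ∪ g.bdry {x | a x = 0}).Finite := hΩfin.union hbdryfin
  obtain ⟨R, hR⟩ := hainf 1
  have hFfin : {y | ∃ w : g.G.Walk x₀ y, w.length ≤ R}.Finite := finite_ball g.G hnbrfin x₀ R
  have hout : ∀ x, x ∉ hFfin.toFinset → 1 ≤ a x := by
    intro x hxF
    apply hR
    by_contra hlt
    push_neg at hlt
    apply hxF
    rw [Set.Finite.mem_toFinset]
    have hreach : g.G.Reachable x₀ x := hconn.preconnected x₀ x
    obtain ⟨w, hw⟩ := hreach.exists_walk_length_eq_dist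
    refine ⟨w, ?_⟩
    rw [hw, SimpleGraph.dist_comm]
    omega
  obtain ⟨δ, hδpos, hδ⟩ : ∃ δ : ℝ, 0 < δ ∧ ∀ x, a x ≠ 0 → δ ≤ a x := by
    set t := hFfin.toFinset.filter (fun x => a x ≠ 0) with ht
    by_cases hne : t.Nonempty
    · refine ⟨min 1 (t.inf' hne a), ?_, ?_⟩
      · apply lt_min one_pos
        rw [Finset.lt_inf'_iff]
        intro b hb
        have hb' : a b ≠ 0 := (Finset.mem_filter.mp hb).2
        exact lt_of_le_of_ne (ha b) (Ne.symm hb')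
      · intro x hax
        by_cases hxF : x ∈ hFfin.toFinset
        · have hxt : x ∈ t := Finset.mem_filter.mpr ⟨hxF, hax⟩
          exact le_trans (min_le_right _ _) (Finset.inf'_le a hxt)
        · exact le_trans (min_le_left _ _) (hout x hxF)
    · refine ⟨1, one_pos, ?_⟩
      intro x hax
      by_cases hxF : x ∈ hFfin.toFinset
      · exact absurd ⟨x, Finset.mem_filter.mpr ⟨hxF, hax⟩⟩ hne
      · exact hout x hxF
  let P : GraphData.Pack g μmin C p a :=
    ⟨δ, hδpos, hδ, hμmin, hμ, hω, ha, hp, hΩfin, hS1fin, ⟨x₁, hx₁⟩⟩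
  constructor
  · intro lam hlam
    exact GraphData.part1 P (by linarith only [hlam])
  · obtain ⟨C₁, hC₁, lam₀, hlam₀, hlow⟩ := GraphData.main_lower P
    have hsq : Filter.Tendsto (fun lam : ℝ => Real.sqrt (1/lam)) Filter.atTop (nhds 0) := by
      have h2 : Filter.Tendsto (fun lam : ℝ => 1/lam) Filter.atTop (nhds 0) := by
        simpa [one_div] using tendsto_inv_atTop_zero (𝕜 := ℝ)
      have h3 := (Real.continuous_sqrt.tendsto 0).comp h2
      rw [Real.sqrt_zero] at h3
      exact h3
    apply tendsto_of_tendsto_of_tendsto_of_le_of_le'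
      (g := fun lam : ℝ =>
        sInf (g.JOmega {x | a x = 0} p '' g.NehariO {x | a x = 0} p) - C₁ * Real.sqrt (1/lam))
      (h := fun _ : ℝ =>
        sInf (g.JOmega {x | a x = 0} p '' g.NehariO {x | a x = 0} p))
    · have h4 := (tendsto_const_nhds
        (x := sInf (g.JOmega {x | a x = 0} p '' g.NehariO {x | a x = 0} p))
        (f := Filter.atTop (α := ℝ))).sub (hsq.const_mul C₁)
      simpa using h4
    · exact tendsto_const_nhds
    · filter_upwards [Filter.eventually_ge_atTop lam₀] with lam hlam
      exact hlow lam hlam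
    · filter_upwards [Filter.eventually_ge_atTop (2:ℝ)] with lam hlam
      exact GraphData.part1 P (by linarith only [hlam])
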